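/- (Set-theoretical solution of the Pachner (3,3)-relation.) Let I = (0,1) ⊂ ℝ and define Q : I² → I³ by Q(x,y) = ((x − x·y)/(1 − x·y), x·y, (y − x·y)/(1 − x·y)). Let σ : I² → I² be the swap σ(x,y) = (y,x). Then the two maps I³ → I⁶ given by ((Q∘σ) × id_{I}³) ∘ (id_I × Q × id_I) ∘ (σ × id_I²) ∘ (id_I × Q) and (id_I² × σ × id_I²) ∘ (id_I³ × (Q∘σ)) ∘ (id_I × Q × id_I) ∘ (id_I² × σ) ∘ (Q × id_I) are equal, where × denotes the cartesian product of maps, id_I^n the identity of I^n, and compositions are written right-to-left (the rightmost map is applied first). -/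

import Mathlib

noncomputable section

namespace PachnerSetTheoretic

/-- The open unit interval `I = (0,1) ⊂ ℝ`. -/
def I : Set ℝ := Set.Ioo 0 1

lemma mul_mem_I {x y : ℝ} (hx : x ∈ I) (hy : y ∈ I) : x * y ∈ I := by
  simp only [I, Set.mem_Ioo] at hx hy ⊢
  exact ⟨mul_pos hx.1 hy.1, by nlinarith [hx.1, hx.2, hy.1, hy.2]⟩

lemma first_mem_I {x y : ℝ} (hx : x ∈ I) (hy : y ∈ I) :
    (x - x * y) / (1 - x * y) ∈ I := by
  simp only [I, Set.mem_Ioo] at hx hy ⊢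
  have h1 : 0 < 1 - x * y := by nlinarith [hx.1, hx.2, hy.1, hy.2]
  refine ⟨div_pos (by nlinarith [hx.1, hy.2]) h1, ?_⟩
  rw [div_lt_one h1]
  linarith [hx.2]

lemma third_mem_I {x y : ℝ} (hx : x ∈ I) (hy : y ∈ I) :
    (y - x * y) / (1 - x * y) ∈ I := by
  simp only [I, Set.mem_Ioo] at hx hy ⊢
  have h1 : 0 < 1 - x * y := by nlinarith [hx.1, hx.2, hy.1, hy.2]
  refine ⟨div_pos (by nlinarith [hy.1, hx.2]) h1, ?_⟩
  rw [div_lt_one h1]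
  linarith [hy.2]

/-- The set-theoretical solution `Q : I² → I³`,
`Q(x,y) = ((x − x·y)/(1 − x·y), x·y, (y − x·y)/(1 − x·y))`. -/
def Q (p : I × I) : I × I × I :=
  (⟨((p.1 : ℝ) - p.1 * p.2) / (1 - p.1 * p.2), first_mem_I p.1.2 p.2.2⟩,
   ⟨(p.1 : ℝ) * p.2, mul_mem_I p.1.2 p.2.2⟩,
   ⟨((p.2 : ℝ) - p.1 * p.2) / (1 - p.1 * p.2), third_mem_I p.1.2 p.2.2⟩)

/-- The swap `σ : I² → I²`. -/
def swap : I × I → I × I := fun p => (p.2, p.1)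

/-- For `F : I² → I³`, the map `F × id_α` acting on the first two factors. -/
def front {α : Type*} (F : I × I → I × I × I) : I × I × α → I × I × I × α :=
  fun p => ((F (p.1, p.2.1)).1, (F (p.1, p.2.1)).2.1, (F (p.1, p.2.1)).2.2, p.2.2)

/-- The map `σ × id_α` swapping the first two factors. -/
def swap12 {α : Type*} : I × I × α → I × I × α := fun p => (p.2.1, p.1, p.2.2)

/-- The set-theoretical Pachner (3,3)-relation: the two composite maps
`I³ → I⁶` coincide. -/
theorem pachner33_set_theoretic :
    (front (Q ∘ swap) ∘ Prod.map id (front Q) ∘ swap12 ∘ Prod.map id Q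
        : I × I × I → I × I × I × I × I × I)
      = Prod.map id (Prod.map id swap12) ∘
          Prod.map id (Prod.map id (Prod.map id (Q ∘ swap))) ∘
            Prod.map id (front Q) ∘ Prod.map id (Prod.map id swap) ∘ front Q := by
  funext p
  obtain ⟨⟨x, hx⟩, ⟨y, hy⟩, ⟨z, hz⟩⟩ := p
  simp only [I, Set.mem_Ioo] at hx hy hz
  simp only [front, Q, swap, swap12, Prod.map, Function.comp, id, Prod.mk.injEq,
    Subtype.mk.injEq]
  have h1 : (1:ℝ) - x * y ≠ 0 := by nlinarith [hx.1, hx.2, hy.1, hy.2]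
  have h2 : (1:ℝ) - y * z ≠ 0 := by nlinarith [hy.1, hy.2, hz.1, hz.2]
  have h3 : (1:ℝ) - x * (y * z) ≠ 0 := by
    nlinarith [hx.1, hx.2, hy.1, hy.2, hz.1, hz.2, mul_pos hy.1 hz.1]
  have h3' : (1:ℝ) - x * y * z ≠ 0 := by rw [mul_assoc]; exact h3
  have e1 : (1:ℝ) - y * x ≠ 0 := by rw [mul_comm]; exact h1
  have e2 : (1:ℝ) - z * y ≠ 0 := by rw [mul_comm]; exact h2
  have e3 : (1:ℝ) - y * x * z ≠ 0 := by rw [mul_comm y x]; exact h3'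
  have e4 : (1:ℝ) - y * z * x ≠ 0 := by rw [mul_comm, ← mul_assoc]; exact h3'
  have e5 : (1:ℝ) - z * y * x ≠ 0 := by rw [mul_comm, mul_comm z y, ← mul_assoc]; exact h3'
  have d1 : 1 - (x - x * (y * z)) / (1 - x * (y * z)) * ((y - y * z) / (1 - y * z))
      = (1 - x * y) / (1 - x * (y * z)) := by
    field_simp
    ring
  have d2 : 1 - (y - x * y) / (1 - x * y) * ((z - x * y * z) / (1 - x * y * z))
      = (1 - y * z) / (1 - x * y * z) := by
    field_simp
    ring
  rw [d1, d2]
  have hd1 : (1 - x * y) / (1 - x * (y * z)) ≠ 0 := div_ne_zero h1 h3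
  have hd2 : (1 - y * z) / (1 - x * y * z) ≠ 0 := div_ne_zero h2 h3'
  refine ⟨?_, ?_, ?_, by ring, ?_, ?_⟩ <;>
  · field_simp <;>
    ring

end PachnerSetTheoretic
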